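/- arXiv:0705.1922 — 2 statements merged into one kernel-verified Lean document; each statement's English description precedes it below -/
import Mathlib

section
/- Truncation theorem for sums of dependent variables with independent signs: On a common probability space, let X_1,...,X_N be real random variables (possibly dependent) whose tails satisfy P(|X_n| ≥ x) ≤ B e^{-α x^β} for all x ≥ x_0 > 0 and all n, for constants B, α, β > 0. Let φ_1,...,φ_N be jointly independent real random variables with −1 ≤ φ_n ≤ 1 and E[φ_n] = 0, with the family {φ_n} independent of the family {X_n}. Let A_1,...,A_N be deterministic coefficients with 0 ≤ A_n ≤ A. Set S_N = ∑_{n=1}^N A_n X_n φ_n. Then for all N > 0 and all x ≥ x_0^{(2+β)/2}: P(|S_N| ≥ √N · x) ≤ 2·max[2, NB] · exp(−min[1/(2A²), α] · x^{2β/(2+β)}). -/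
open MeasureTheory ProbabilityTheory

/-- Hoeffding's lemma (mgf form) for variables in `[-C, C]` with zero mean. -/
lemma hoeffding_mgf {Ω : Type*} [MeasurableSpace Ω] (ν : Measure Ω)
    [IsProbabilityMeasure ν] (Y : Ω → ℝ) (hYmeas : Measurable Y) (C : ℝ) (hC : 0 < C)
    (hbd : ∀ ω, Y ω ∈ Set.Icc (-C) C) (hmean : ν[Y] = 0) (t : ℝ) :
    mgf Y ν t ≤ Real.exp (t ^ 2 * C ^ 2 / 2) := by
  set e1 := Real.exp (-(t * C)) with he1
  set e2 := Real.exp (t * C) with he2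
  have hYint : Integrable Y ν := by
    refine ⟨hYmeas.aestronglyMeasurable, ?_⟩
    refine HasFiniteIntegral.of_bounded (C := C) (Filter.Eventually.of_forall fun ω => ?_)
    rw [Real.norm_eq_abs, abs_le]
    exact ⟨(hbd ω).1, (hbd ω).2⟩
  have hint1 : Integrable (fun ω => Real.exp (t * Y ω)) ν := by
    refine ⟨((hYmeas.const_mul t).exp).aestronglyMeasurable, ?_⟩
    refine HasFiniteIntegral.of_bounded (C := Real.exp (|t| * C))
      (Filter.Eventually.of_forall fun ω => ?_)
    rw [Real.norm_eq_abs, abs_of_pos (Real.exp_pos _), Real.exp_le_exp]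
    calc t * Y ω ≤ |t * Y ω| := le_abs_self _
      _ = |t| * |Y ω| := abs_mul _ _
      _ ≤ |t| * C := by
          refine mul_le_mul_of_nonneg_left ?_ (abs_nonneg t)
          rw [abs_le]; exact ⟨(hbd ω).1, (hbd ω).2⟩
  have key : ∀ ω, Real.exp (t * Y ω) ≤
      ((C - Y ω) * e1 + (C + Y ω) * e2) / (2 * C) := by
    intro ω
    have hy := hbd ω
    have hC' : (2 * C) ≠ 0 := by positivity
    have ha : 0 ≤ (C - Y ω) / (2 * C) := by
      apply div_nonneg _ (by positivity)
      linarith [hy.2]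
    have hb : 0 ≤ (C + Y ω) / (2 * C) := by
      apply div_nonneg _ (by positivity)
      linarith [hy.1]
    have hab : (C - Y ω) / (2 * C) + (C + Y ω) / (2 * C) = 1 := by
      field_simp; ring
    have := convexOn_exp.2 (Set.mem_univ (-(t * C))) (Set.mem_univ (t * C)) ha hb hab
    simp only [smul_eq_mul] at this
    have harg : (C - Y ω) / (2 * C) * -(t * C) + (C + Y ω) / (2 * C) * (t * C)
        = t * Y ω := by field_simp; ring
    rw [harg] at this
    calc Real.exp (t * Y ω) ≤ (C - Y ω) / (2 * C) * e1 + (C + Y ω) / (2 * C) * e2 := this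
      _ = ((C - Y ω) * e1 + (C + Y ω) * e2) / (2 * C) := by ring
  have hint2 : Integrable (fun ω => ((C - Y ω) * e1 + (C + Y ω) * e2) / (2 * C)) ν := by
    apply Integrable.div_const
    exact (((integrable_const C).sub hYint).mul_const e1).add
      (((integrable_const C).add hYint).mul_const e2)
  have hle : mgf Y ν t ≤ ∫ ω, ((C - Y ω) * e1 + (C + Y ω) * e2) / (2 * C) ∂ν :=
    integral_mono hint1 hint2 key
  have hval : ∫ ω, ((C - Y ω) * e1 + (C + Y ω) * e2) / (2 * C) ∂ν
      = Real.cosh (t * C) := by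
    have hfun : ∀ ω, ((C - Y ω) * e1 + (C + Y ω) * e2) / (2 * C)
        = (e2 - e1) / (2 * C) * Y ω + (e1 + e2) / 2 := by
      intro ω; field_simp; ring
    simp_rw [hfun]
    rw [integral_add (hYint.const_mul _) (integrable_const _), integral_const_mul, hmean,
      integral_const, Real.cosh_eq]
    simp [he1, he2]
    ring
  calc mgf Y ν t ≤ Real.cosh (t * C) := hval ▸ hle
    _ ≤ Real.exp ((t * C) ^ 2 / 2) := Real.cosh_le_exp_half_sq _
    _ = Real.exp (t ^ 2 * C ^ 2 / 2) := by rw [mul_pow]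

lemma integrable_of_abs_le {Ω : Type*} [MeasurableSpace Ω] {ν : Measure Ω}
    [IsFiniteMeasure ν] {f : Ω → ℝ} (hf : Measurable f) (C : ℝ)
    (h : ∀ ω, |f ω| ≤ C) : Integrable f ν := by
  refine ⟨hf.aestronglyMeasurable, ?_⟩
  exact HasFiniteIntegral.of_bounded (C := C) (Filter.Eventually.of_forall fun ω => h ω)

/-- One-sided Hoeffding tail bound for independent bounded zero-mean variables. -/
lemma hoeffding_tail_one {Ω : Type*} [MeasurableSpace Ω] (ν : Measure Ω)
    [IsProbabilityMeasure ν] (N : ℕ) (hN : 0 < N) (ψ : Fin N → Ω → ℝ)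
    (hmeas : ∀ n, Measurable (ψ n))
    (hindep : iIndepFun ψ ν)
    (C : ℝ) (hC : 0 < C) (hbd : ∀ n ω, ψ n ω ∈ Set.Icc (-C) C)
    (hmean : ∀ n, ν[ψ n] = 0) (s : ℝ) (hs : 0 ≤ s) :
    (ν {ω | s ≤ ∑ n, ψ n ω}).toReal ≤ Real.exp (-(s ^ 2 / (2 * N * C ^ 2))) := by
  have hNR : (0 : ℝ) < N := Nat.cast_pos.mpr hN
  set t : ℝ := s / (N * C ^ 2) with ht
  have htnn : 0 ≤ t := div_nonneg hs (by positivity)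
  have habs : ∀ n ω, |ψ n ω| ≤ C := fun n ω => abs_le.mpr ⟨(hbd n ω).1, (hbd n ω).2⟩
  have hint : ∀ n, Integrable (fun ω => Real.exp (t * ψ n ω)) ν := by
    intro n
    refine integrable_of_abs_le ((hmeas n).const_mul t).exp (Real.exp (|t| * C)) fun ω => ?_
    rw [abs_of_pos (Real.exp_pos _), Real.exp_le_exp]
    calc t * ψ n ω ≤ |t * ψ n ω| := le_abs_self _
      _ = |t| * |ψ n ω| := abs_mul _ _
      _ ≤ |t| * C := mul_le_mul_of_nonneg_left (habs n ω) (abs_nonneg t)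
  have hsum_eq : (fun ω => ∑ n, ψ n ω) = ∑ n, ψ n := by ext ω; simp
  have hint_sum : Integrable (fun ω => Real.exp (t * (∑ n, ψ n) ω)) ν := by
    refine integrable_of_abs_le (by
      rw [← hsum_eq]; exact (Finset.measurable_sum _ fun n _ => hmeas n).const_mul t |>.exp)
      (Real.exp (|t| * (N * C))) fun ω => ?_
    rw [abs_of_pos (Real.exp_pos _), Real.exp_le_exp]
    calc t * (∑ n, ψ n) ω ≤ |t * (∑ n, ψ n) ω| := le_abs_self _
      _ = |t| * |(∑ n, ψ n) ω| := abs_mul _ _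
      _ ≤ |t| * (N * C) := by
          refine mul_le_mul_of_nonneg_left ?_ (abs_nonneg t)
          rw [Finset.sum_apply]
          calc |∑ n, ψ n ω| ≤ ∑ n, |ψ n ω| := Finset.abs_sum_le_sum_abs _ _
            _ ≤ ∑ _n : Fin N, C := Finset.sum_le_sum fun n _ => habs n ω
            _ = N * C := by simp [mul_comm]
  have hchern := measure_ge_le_exp_mul_mgf (μ := ν) (X := ∑ n, ψ n) s htnn hint_sum
  have hset : {ω | s ≤ ∑ n, ψ n ω} = {ω | s ≤ (∑ n, ψ n) ω} := by
    ext ω; simp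
  rw [hset]
  refine hchern.trans ?_
  have hmgf : mgf (∑ n, ψ n) ν t ≤ Real.exp (N * (t ^ 2 * C ^ 2 / 2)) := by
    rw [hindep.mgf_sum hmeas]
    calc ∏ n, mgf (ψ n) ν t ≤ ∏ _n : Fin N, Real.exp (t ^ 2 * C ^ 2 / 2) := by
          refine Finset.prod_le_prod (fun n _ => mgf_nonneg) fun n _ => ?_
          exact hoeffding_mgf ν (ψ n) (hmeas n) C hC (hbd n) (hmean n) t
      _ = Real.exp (N * (t ^ 2 * C ^ 2 / 2)) := by
          rw [Finset.prod_const, ← Real.exp_nat_mul]; simp [mul_comm]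
  calc Real.exp (-t * s) * mgf (∑ n, ψ n) ν t
      ≤ Real.exp (-t * s) * Real.exp (N * (t ^ 2 * C ^ 2 / 2)) := by
        exact mul_le_mul_of_nonneg_left hmgf (Real.exp_pos _).le
    _ = Real.exp (-t * s + N * (t ^ 2 * C ^ 2 / 2)) := (Real.exp_add _ _).symm
    _ = Real.exp (-(s ^ 2 / (2 * N * C ^ 2))) := by
        congr 1
        rw [ht]
        field_simp
        ring

/-- Two-sided Hoeffding tail bound. -/
lemma hoeffding_tail_abs {Ω : Type*} [MeasurableSpace Ω] (ν : Measure Ω)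
    [IsProbabilityMeasure ν] (N : ℕ) (hN : 0 < N) (ψ : Fin N → Ω → ℝ)
    (hmeas : ∀ n, Measurable (ψ n))
    (hindep : iIndepFun ψ ν)
    (C : ℝ) (hC : 0 < C) (hbd : ∀ n ω, ψ n ω ∈ Set.Icc (-C) C)
    (hmean : ∀ n, ν[ψ n] = 0) (s : ℝ) (hs : 0 ≤ s) :
    ν {ω | s ≤ |∑ n, ψ n ω|} ≤
      ENNReal.ofReal (2 * Real.exp (-(s ^ 2 / (2 * N * C ^ 2)))) := by
  set ψ' : Fin N → Ω → ℝ := fun n ω => -ψ n ω with hψ'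
  have hmeas' : ∀ n, Measurable (ψ' n) := fun n => (hmeas n).neg
  have hindep' : iIndepFun ψ' ν := by
    have := hindep.comp (fun _ : Fin N => (fun y : ℝ => -y)) (fun _ => measurable_neg)
    exact this
  have hbd' : ∀ n ω, ψ' n ω ∈ Set.Icc (-C) C := by
    intro n ω
    have h := hbd n ω
    constructor
    · simp only [hψ']; linarith [h.2]
    · simp only [hψ']; linarith [h.1]
  have hmean' : ∀ n, ν[ψ' n] = 0 := by
    intro n
    have : ψ' n = fun ω => -ψ n ω := rfl
    rw [this, integral_neg, hmean n, neg_zero]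
  have h1 := hoeffding_tail_one ν N hN ψ hmeas hindep C hC hbd hmean s hs
  have h2 := hoeffding_tail_one ν N hN ψ' hmeas' hindep' C hC hbd' hmean' s hs
  have hsub : {ω | s ≤ |∑ n, ψ n ω|} ⊆
      {ω | s ≤ ∑ n, ψ n ω} ∪ {ω | s ≤ ∑ n, ψ' n ω} := by
    intro ω hω
    rcases abs_cases (∑ n, ψ n ω) with ⟨h, _⟩ | ⟨h, _⟩
    · left; exact Set.mem_setOf_eq ▸ (h ▸ hω)
    · right
      simp only [Set.mem_setOf_eq, hψ', Finset.sum_neg_distrib]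
      rw [Set.mem_setOf_eq, h] at hω
      exact hω
  have key : ∀ (g : Fin N → Ω → ℝ),
      (ν {ω | s ≤ ∑ n, g n ω}).toReal ≤ Real.exp (-(s ^ 2 / (2 * N * C ^ 2))) →
      ν {ω | s ≤ ∑ n, g n ω} ≤ ENNReal.ofReal (Real.exp (-(s ^ 2 / (2 * N * C ^ 2)))) := by
    intro g hg
    exact (ENNReal.le_ofReal_iff_toReal_le (measure_ne_top ν _) (Real.exp_pos _).le).mpr hg
  calc ν {ω | s ≤ |∑ n, ψ n ω|}
      ≤ ν ({ω | s ≤ ∑ n, ψ n ω} ∪ {ω | s ≤ ∑ n, ψ' n ω}) := measure_mono hsub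
    _ ≤ ν {ω | s ≤ ∑ n, ψ n ω} + ν {ω | s ≤ ∑ n, ψ' n ω} := measure_union_le _ _
    _ ≤ ENNReal.ofReal (Real.exp (-(s ^ 2 / (2 * N * C ^ 2))))
        + ENNReal.ofReal (Real.exp (-(s ^ 2 / (2 * N * C ^ 2)))) :=
        add_le_add (key ψ h1) (key ψ' h2)
    _ = ENNReal.ofReal (2 * Real.exp (-(s ^ 2 / (2 * N * C ^ 2)))) := by
        rw [← ENNReal.ofReal_add (Real.exp_pos _).le (Real.exp_pos _).le]
        congr 1; ring

/-- Truncation theorem for sums of dependent variables with independent phases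
(Theorem 11 / Appendix A of the paper): if the (possibly dependent) `X_n` have uniformly
exponentially decaying tails `P(|X_n| ≥ x) ≤ B e^{-α x^β}` for `x ≥ x₀`, the `φ_n` are
jointly independent, `[-1,1]`-valued, zero mean, and independent of the `X_n`, and
`0 ≤ A_n ≤ A`, then for `S_N = ∑ A_n X_n φ_n` and all `x ≥ x₀^{(2+β)/2}`,
`P(|S_N| ≥ √N x) ≤ 2 max[2, NB] exp(−min[1/(2A²), α] x^{2β/(2+β)})`. -/
theorem truncation_theorem {Ω : Type*} [MeasurableSpace Ω] (μ : Measure Ω)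
    [IsProbabilityMeasure μ] (N : ℕ) (hN : 0 < N)
    (X φ : Fin N → Ω → ℝ)
    (hXmeas : ∀ n, Measurable (X n)) (hφmeas : ∀ n, Measurable (φ n))
    (B α β x₀ : ℝ) (hB : 0 < B) (hα : 0 < α) (hβ : 0 < β) (hx₀ : 0 < x₀)
    (htail : ∀ n, ∀ x : ℝ, x₀ ≤ x →
      μ {ω | x ≤ |X n ω|} ≤ ENNReal.ofReal (B * Real.exp (-α * x ^ β)))
    (hφindep : iIndepFun φ μ)
    (hφbdd : ∀ n ω, φ n ω ∈ Set.Icc (-1 : ℝ) 1)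
    (hφmean : ∀ n, μ[φ n] = 0)
    (hXφindep : IndepFun (fun ω => fun n => X n ω) (fun ω => fun n => φ n ω) μ)
    (A : Fin N → ℝ) (Abd : ℝ) (hAbd : 0 < Abd)
    (hA : ∀ n, A n ∈ Set.Icc (0 : ℝ) Abd)
    (x : ℝ) (hx : x₀ ^ ((2 + β) / 2) ≤ x) :
    μ {ω | Real.sqrt N * x ≤ |∑ n, A n * X n ω * φ n ω|}
      ≤ ENNReal.ofReal (2 * max 2 (N * B) *
          Real.exp (-(min (1 / (2 * Abd ^ 2)) α) * x ^ (2 * β / (2 + β)))) := by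
  have h2β : (0 : ℝ) < 2 + β := by linarith
  have hxpos : 0 < x := lt_of_lt_of_le (Real.rpow_pos_of_pos hx₀ _) hx
  set T : ℝ := x ^ ((2 : ℝ) / (2 + β)) with hTdef
  set y : ℝ := x ^ (2 * β / (2 + β)) with hydef
  have hTpos : 0 < T := Real.rpow_pos_of_pos hxpos _
  have hypos : 0 < y := Real.rpow_pos_of_pos hxpos _
  have hTx₀ : x₀ ≤ T := by
    have h1 : x₀ = (x₀ ^ ((2 + β) / 2)) ^ ((2 : ℝ) / (2 + β)) := by
      rw [← Real.rpow_mul hx₀.le]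
      rw [show (2 + β) / 2 * (2 / (2 + β)) = 1 by field_simp]
      rw [Real.rpow_one]
    rw [h1, hTdef]
    exact Real.rpow_le_rpow (Real.rpow_pos_of_pos hx₀ _).le hx (by positivity)
  have hTβ : T ^ β = y := by
    rw [hTdef, ← Real.rpow_mul hxpos.le, hydef]
    congr 1
    field_simp
  have hx2 : x ^ (2 : ℕ) = y * T ^ (2 : ℕ) := by
    rw [hTdef, hydef, ← Real.rpow_natCast (x ^ ((2:ℝ)/(2+β))) 2,
      ← Real.rpow_mul hxpos.le, ← Real.rpow_add hxpos,
      ← Real.rpow_natCast x 2]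
    congr 1
    push_cast
    field_simp
    ring
  -- The truncation event
  set E : Set Ω := ⋃ n, {ω | T ≤ |X n ω|} with hEdef
  have hμE : μ E ≤ ENNReal.ofReal (N * (B * Real.exp (-α * y))) := by
    calc μ E ≤ ∑' n : Fin N, μ {ω | T ≤ |X n ω|} := measure_iUnion_le _
      _ ≤ ∑' _n : Fin N, ENNReal.ofReal (B * Real.exp (-α * y)) := by
          refine ENNReal.tsum_le_tsum fun n => ?_
          have := htail n T hTx₀
          rwa [hTβ] at this
      _ = (N : ENNReal) * ENNReal.ofReal (B * Real.exp (-α * y)) := by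
          rw [tsum_fintype, Finset.sum_const, Finset.card_univ, Fintype.card_fin,
            nsmul_eq_mul]
      _ = ENNReal.ofReal (N * (B * Real.exp (-α * y))) := by
          rw [ENNReal.ofReal_mul (by positivity : (0:ℝ) ≤ (N:ℝ)), ENNReal.ofReal_natCast]
  -- The good part via Fubini and Hoeffding
  set Xv : Ω → (Fin N → ℝ) := fun ω => fun n => X n ω with hXvdef
  set φv : Ω → (Fin N → ℝ) := fun ω => fun n => φ n ω with hφvdef
  have hXv : Measurable Xv := measurable_pi_lambda _ fun n => hXmeas n
  have hφv : Measurable φv := measurable_pi_lambda _ fun n => hφmeas n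
  set s₀ : ℝ := Real.sqrt N * x with hs₀def
  have hs₀ : 0 ≤ s₀ := mul_nonneg (Real.sqrt_nonneg _) hxpos.le
  set G : Set ((Fin N → ℝ) × (Fin N → ℝ)) :=
    {p | (s₀ ≤ |∑ n, A n * p.1 n * p.2 n|) ∧ ∀ n, |p.1 n| < T} with hGdef
  have hGmeas : MeasurableSet G := by
    rw [hGdef, Set.setOf_and]
    apply MeasurableSet.inter
    · refine measurableSet_le measurable_const ?_
      refine Measurable.abs ?_
      refine Finset.measurable_sum _ fun n _ => ?_
      exact (Measurable.const_mul (show Measurable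
          fun p : (Fin N → ℝ) × (Fin N → ℝ) => p.1 n from
          (measurable_pi_apply n).comp measurable_fst) _).mul
        (show Measurable fun p : (Fin N → ℝ) × (Fin N → ℝ) => p.2 n from
          (measurable_pi_apply n).comp measurable_snd)
    · rw [Set.setOf_forall]
      refine MeasurableSet.iInter fun n => ?_
      exact measurableSet_lt (Measurable.abs (show Measurable
        fun p : (Fin N → ℝ) × (Fin N → ℝ) => p.1 n from
        (measurable_pi_apply n).comp measurable_fst)) measurable_const
  have hsplit : {ω | s₀ ≤ |∑ n, A n * X n ω * φ n ω|} ⊆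
      ((fun ω => (Xv ω, φv ω)) ⁻¹' G) ∪ E := by
    intro ω hω
    by_cases hcase : ∀ n, |X n ω| < T
    · left
      exact ⟨hω, hcase⟩
    · right
      push_neg at hcase
      obtain ⟨n, hn⟩ := hcase
      exact Set.mem_iUnion.mpr ⟨n, hn⟩
  have hgood : μ ((fun ω => (Xv ω, φv ω)) ⁻¹' G) ≤
      ENNReal.ofReal (2 * Real.exp (-(y / (2 * Abd ^ 2)))) := by
    rw [← Measure.map_apply (hXv.prodMk hφv) hGmeas]
    rw [(indepFun_iff_map_prod_eq_prod_map_map hXv.aemeasurable hφv.aemeasurable).mp hXφindep]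
    rw [Measure.prod_apply hGmeas]
    have hinner : ∀ a : Fin N → ℝ, (μ.map φv) (Prod.mk a ⁻¹' G) ≤
        ENNReal.ofReal (2 * Real.exp (-(y / (2 * Abd ^ 2)))) := by
      intro a
      by_cases hcase : ∀ n, |a n| < T
      · have hpre : Prod.mk a ⁻¹' G = {b | s₀ ≤ |∑ n, A n * a n * b n|} := by
          ext b
          simp only [hGdef, Set.mem_preimage, Set.mem_setOf_eq]
          exact ⟨fun h => h.1, fun h => ⟨h, hcase⟩⟩
        have hset_meas : MeasurableSet {b : Fin N → ℝ | s₀ ≤ |∑ n, A n * a n * b n|} := by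
          refine measurableSet_le measurable_const ?_
          exact (Finset.measurable_sum _ fun n _ =>
            (measurable_pi_apply n).const_mul _).abs
        rw [hpre, Measure.map_apply hφv hset_meas]
        have hpre2 : φv ⁻¹' {b | s₀ ≤ |∑ n, A n * a n * b n|} =
            {ω | s₀ ≤ |∑ n, A n * a n * φ n ω|} := rfl
        rw [hpre2]
        have hH := hoeffding_tail_abs μ N hN (fun n ω => A n * a n * φ n ω)
          (fun n => (hφmeas n).const_mul _)
          (by
            have := hφindep.comp (fun n (z : ℝ) => A n * a n * z)
              (fun n => measurable_const_mul _)
            exact this)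
          (Abd * T) (by positivity)
          (fun n ω => by
            rw [Set.mem_Icc, ← abs_le]
            calc |A n * a n * φ n ω| = |A n| * |a n| * |φ n ω| := by
                  rw [abs_mul, abs_mul]
              _ ≤ Abd * T * 1 := by
                  have h1 : |A n| ≤ Abd := by
                    rw [abs_of_nonneg (hA n).1]; exact (hA n).2
                  have h2 : |φ n ω| ≤ 1 := abs_le.mpr ⟨(hφbdd n ω).1, (hφbdd n ω).2⟩
                  have h3 : (0:ℝ) ≤ |a n| := abs_nonneg _
                  have h4 : |a n| ≤ T := (hcase n).le
                  gcongr
              _ = Abd * T := mul_one _)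
          (fun n => by
            rw [show (fun ω => A n * a n * φ n ω) = fun ω => (A n * a n) * φ n ω from rfl]
            rw [integral_const_mul, hφmean n, mul_zero])
          s₀ hs₀
        refine hH.trans ?_
        apply ENNReal.ofReal_le_ofReal
        have hexp : s₀ ^ 2 / (2 * N * (Abd * T) ^ 2) = y / (2 * Abd ^ 2) := by
          have hsq : s₀ ^ 2 = N * x ^ 2 := by
            rw [hs₀def, mul_pow, Real.sq_sqrt (Nat.cast_nonneg N)]
          rw [hsq, hx2]
          have hNne : (N : ℝ) ≠ 0 := Nat.cast_ne_zero.mpr hN.ne'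
          field_simp
        rw [hexp]
      · have hpre : Prod.mk a ⁻¹' G = ∅ := by
          ext b
          simp only [hGdef, Set.mem_preimage, Set.mem_setOf_eq, Set.mem_empty_iff_false,
            iff_false, not_and]
          intro _ h
          exact hcase h
        rw [hpre]
        simp
    calc ∫⁻ a, (μ.map φv) (Prod.mk a ⁻¹' G) ∂(μ.map Xv)
        ≤ ∫⁻ _a, ENNReal.ofReal (2 * Real.exp (-(y / (2 * Abd ^ 2)))) ∂(μ.map Xv) :=
          lintegral_mono hinner
      _ = ENNReal.ofReal (2 * Real.exp (-(y / (2 * Abd ^ 2)))) := by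
          have : IsProbabilityMeasure (μ.map Xv) := Measure.isProbabilityMeasure_map hXv.aemeasurable
          rw [lintegral_const, measure_univ, mul_one]
  -- Combine
  calc μ {ω | s₀ ≤ |∑ n, A n * X n ω * φ n ω|}
      ≤ μ (((fun ω => (Xv ω, φv ω)) ⁻¹' G) ∪ E) := measure_mono hsplit
    _ ≤ μ ((fun ω => (Xv ω, φv ω)) ⁻¹' G) + μ E := measure_union_le _ _
    _ ≤ ENNReal.ofReal (2 * Real.exp (-(y / (2 * Abd ^ 2))))
        + ENNReal.ofReal (N * (B * Real.exp (-α * y))) := add_le_add hgood hμE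
    _ = ENNReal.ofReal (2 * Real.exp (-(y / (2 * Abd ^ 2)))
        + N * (B * Real.exp (-α * y))) := by
        rw [← ENNReal.ofReal_add (by positivity) (by positivity)]
    _ ≤ ENNReal.ofReal (2 * max 2 (N * B) *
          Real.exp (-(min (1 / (2 * Abd ^ 2)) α) * y)) := by
        apply ENNReal.ofReal_le_ofReal
        set m : ℝ := min (1 / (2 * Abd ^ 2)) α with hm
        have h1 : Real.exp (-(y / (2 * Abd ^ 2))) ≤ Real.exp (-m * y) := by
          apply Real.exp_le_exp.mpr
          have : m ≤ 1 / (2 * Abd ^ 2) := min_le_left _ _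
          rw [neg_mul]
          rw [neg_le_neg_iff]
          calc m * y ≤ 1 / (2 * Abd ^ 2) * y := by gcongr
            _ = y / (2 * Abd ^ 2) := by ring
        have h2 : Real.exp (-α * y) ≤ Real.exp (-m * y) := by
          apply Real.exp_le_exp.mpr
          have : m ≤ α := min_le_right _ _
          rw [neg_mul, neg_mul, neg_le_neg_iff]
          gcongr
        have h3 : (2 : ℝ) ≤ max 2 (N * B) := le_max_left _ _
        have h4 : (N : ℝ) * B ≤ max 2 (N * B) := le_max_right _ _
        have hE := Real.exp_pos (-m * y)
        nlinarith [Real.exp_pos (-(y / (2 * Abd ^ 2))), Real.exp_pos (-α * y),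
          Nat.cast_nonneg (α := ℝ) N, hB.le,
          mul_le_mul_of_nonneg_left h1 (by norm_num : (0:ℝ) ≤ 2),
          mul_le_mul_of_nonneg_left h2 (by positivity : (0:ℝ) ≤ (N:ℝ) * B)]
end

section
/- Maurer's inequality: Let X_1,...,X_N be independent real random variables with X_n ≥ 0 and E[X_n²] < ∞. Let S_N = ∑_{n=1}^N X_n. Then for every x > 0: P(S_N − E[S_N] ≤ −Nx) ≤ exp(−N²x²/(2∑_{n=1}^N E[X_n²])). -/
open MeasureTheory ProbabilityTheory

lemma exp_neg_le_quad {u : ℝ} (hu : 0 ≤ u) : Real.exp (-u) ≤ 1 - u + u ^ 2 / 2 := by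
  have h := Real.quadratic_le_exp_of_nonneg hu
  have hpos : (0:ℝ) < 1 + u + u ^ 2 / 2 := by positivity
  have h2 : Real.exp (-u) ≤ (1 + u + u ^ 2 / 2)⁻¹ := by
    rw [Real.exp_neg]; exact inv_anti₀ hpos h
  refine h2.trans ?_
  rw [inv_le_iff_one_le_mul₀ hpos]
  nlinarith [sq_nonneg u, sq_nonneg (u ^ 2)]

/-- Maurer's inequality: for independent nonnegative real random variables `X_n` with
finite second moments and `S_N = ∑ X_n`, for every `x > 0`,
`P(S_N − E S_N ≤ −N x) ≤ exp(−N²x²/(2 ∑ E[X_n²]))`. -/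
theorem maurer_inequality {Ω : Type*} [MeasurableSpace Ω] (μ : Measure Ω)
    [IsProbabilityMeasure μ] (N : ℕ)
    (X : Fin N → Ω → ℝ) (hXmeas : ∀ n, Measurable (X n))
    (hXnn : ∀ n ω, 0 ≤ X n ω)
    (hindep : iIndepFun X μ)
    (hint : ∀ n, Integrable (fun ω => (X n ω) ^ 2) μ)
    (x : ℝ) (hx : 0 < x) :
    μ {ω | (∑ n, X n ω) - μ[fun ω' => ∑ n, X n ω'] ≤ -((N : ℝ) * x)}
      ≤ ENNReal.ofReal
        (Real.exp (-((N : ℝ) ^ 2 * x ^ 2) /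
          (2 * ∑ n, μ[fun ω' => (X n ω') ^ 2]))) := by
  set v : Fin N → ℝ := fun n => μ[fun ω' => (X n ω') ^ 2] with hv
  set V : ℝ := ∑ n, v n with hV
  have hvnn : ∀ n, 0 ≤ v n := fun n => integral_nonneg fun ω => sq_nonneg _
  have hVnn : 0 ≤ V := Finset.sum_nonneg fun n _ => hvnn n
  rcases eq_or_lt_of_le hVnn with hV0 | hVpos
  · rw [← hV0, mul_zero, div_zero, Real.exp_zero, ENNReal.ofReal_one]
    exact prob_le_one
  have hXint : ∀ n, Integrable (X n) μ := by
    intro n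
    refine Integrable.mono' (((hint n).add (integrable_const 1)).div_const 2)
      (hXmeas n).aestronglyMeasurable (ae_of_all _ fun ω => ?_)
    rw [Real.norm_eq_abs, abs_of_nonneg (hXnn n ω)]
    have := sq_nonneg (X n ω - 1)
    simp only [Pi.add_apply, Pi.div_apply]
    nlinarith
  set m : Fin N → ℝ := fun n => μ[X n] with hm
  set S : Ω → ℝ := ∑ n, X n with hS
  have hSapp : ∀ ω, S ω = ∑ n, X n ω := fun ω => by simp [hS]
  have hSmeas : Measurable S := by
    have : S = fun ω => ∑ n, X n ω := funext hSapp
    rw [this]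
    exact Finset.measurable_sum _ fun n _ => hXmeas n
  have hES : μ[fun ω' => ∑ n, X n ω'] = ∑ n, m n := by
    simp only [hm]
    exact integral_finset_sum _ fun n _ => hXint n
  have hN : 0 < N := by
    rcases Nat.eq_zero_or_pos N with h | h
    · exfalso
      subst h
      rw [hV] at hVpos
      simp at hVpos
    · exact h
  set t : ℝ := (N : ℝ) * x / V with ht
  have htpos : 0 < t := by
    apply div_pos _ hVpos
    positivity
  have hSnn : ∀ ω, 0 ≤ S ω := fun ω => by
    rw [hSapp]; exact Finset.sum_nonneg fun n _ => hXnn n ω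
  have hexpint : ∀ (Y : Ω → ℝ), Measurable Y → (∀ ω, 0 ≤ Y ω) →
      Integrable (fun ω => Real.exp (-t * Y ω)) μ := by
    intro Y hYm hYnn
    refine Integrable.mono' (integrable_const 1)
      ((hYm.const_mul (-t)).exp.aestronglyMeasurable) (ae_of_all _ fun ω => ?_)
    rw [Real.norm_eq_abs, abs_of_nonneg (Real.exp_pos _).le, Real.exp_le_one_iff]
    have := hYnn ω
    nlinarith
  have hchernoff := measure_le_le_exp_mul_mgf (X := S) (μ := μ) (∑ n, m n - (N:ℝ) * x)
    (neg_nonpos.mpr htpos.le) (hexpint S hSmeas hSnn)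
  have hmgf_sum : mgf S μ (-t) = ∏ n, mgf (X n) μ (-t) := by
    rw [hS]; exact hindep.mgf_sum hXmeas Finset.univ
  have hmgf_bound : ∀ n, mgf (X n) μ (-t) ≤ Real.exp (-t * m n + t ^ 2 * v n / 2) := by
    intro n
    have hI1 : Integrable (fun ω => 1 - t * X n ω) μ := by
      exact (integrable_const (1:ℝ)).sub ((hXint n).const_mul t)
    have hI2 : Integrable (fun ω => (t * X n ω) ^ 2 / 2) μ :=
      (((hint n).const_mul (t ^ 2)).div_const 2).congr (ae_of_all _ fun ω => by ring)
    have hle : mgf (X n) μ (-t) ≤ 1 - t * m n + t ^ 2 * v n / 2 := by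
      have hmono : ∫ ω, Real.exp (-t * X n ω) ∂μ ≤
          ∫ ω, (1 - t * X n ω + (t * X n ω) ^ 2 / 2) ∂μ := by
        refine integral_mono (hexpint (X n) (hXmeas n) (hXnn n)) (hI1.add hI2)
          fun ω => ?_
        have h := exp_neg_le_quad (u := t * X n ω) (mul_nonneg htpos.le (hXnn n ω))
        rw [neg_mul]
        exact h
      have e1 : ∫ ω, (1 - t * X n ω + (t * X n ω) ^ 2 / 2) ∂μ =
          (∫ ω, (1 - t * X n ω) ∂μ) + ∫ ω, (t * X n ω) ^ 2 / 2 ∂μ :=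
        integral_add hI1 hI2
      have e2 : ∫ ω, (1 - t * X n ω) ∂μ = 1 - t * m n := by
        rw [integral_sub (integrable_const 1) ((hXint n).const_mul t),
          integral_const, integral_const_mul]
        simp [hm]
      have e3 : ∫ ω, (t * X n ω) ^ 2 / 2 ∂μ = t ^ 2 * v n / 2 := by
        have hptw : ∀ ω, (t * X n ω) ^ 2 / 2 = t ^ 2 / 2 * X n ω ^ 2 := fun ω => by ring
        simp_rw [hptw, integral_const_mul]
        simp only [hv]
        ring
      have : mgf (X n) μ (-t) = ∫ ω, Real.exp (-t * X n ω) ∂μ := rfl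
      rw [this]
      rw [e1, e2, e3] at hmono
      linarith
    refine hle.trans ?_
    have := Real.add_one_le_exp (-t * m n + t ^ 2 * v n / 2)
    linarith
  have hprod : mgf S μ (-t) ≤ Real.exp (∑ n, (-t * m n + t ^ 2 * v n / 2)) := by
    rw [hmgf_sum, Real.exp_sum]
    exact Finset.prod_le_prod (fun n _ => mgf_nonneg) fun n _ => hmgf_bound n
  have hfinal : (μ {ω | S ω ≤ ∑ n, m n - (N:ℝ) * x}).toReal ≤
      Real.exp (-((N : ℝ) ^ 2 * x ^ 2) / (2 * V)) := by
    refine hchernoff.trans ?_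
    calc Real.exp (-(-t) * (∑ n, m n - (N:ℝ) * x)) * mgf S μ (-t)
        ≤ Real.exp (t * (∑ n, m n - (N:ℝ) * x)) *
          Real.exp (∑ n, (-t * m n + t ^ 2 * v n / 2)) := by
          rw [neg_neg]
          exact mul_le_mul_of_nonneg_left hprod (Real.exp_pos _).le
      _ = Real.exp (-((N : ℝ) ^ 2 * x ^ 2) / (2 * V)) := by
          rw [← Real.exp_add]
          congr 1
          have hsum : ∑ n, (-t * m n + t ^ 2 * v n / 2) =
              -t * (∑ n, m n) + t ^ 2 * V / 2 := by
            rw [Finset.sum_add_distrib, ← Finset.mul_sum, hV, ← Finset.sum_div,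
              ← Finset.mul_sum]
          rw [hsum, ht]
          field_simp
          ring
  have hev : {ω | (∑ n, X n ω) - μ[fun ω' => ∑ n, X n ω'] ≤ -((N : ℝ) * x)} =
      {ω | S ω ≤ ∑ n, m n - (N:ℝ) * x} := by
    ext ω
    simp only [Set.mem_setOf_eq, hSapp, hES]
    constructor <;> intro h <;> linarith
  rw [hev, ← ENNReal.ofReal_toReal (measure_ne_top μ _)]
  exact ENNReal.ofReal_le_ofReal hfinal
end
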